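/- For the M×M matrix C_{M,δ} with ones on the diagonal and δ ∈ (0,1) off the diagonal, the Schur complement with respect to any j distinct columns (1 ≤ j < M) has trace (M - j)(1 + 1/(δ⁻¹ + j - 1))(1 - δ). -/

import Mathlib

open Matrix

theorem schur_trace_C {M : ℕ} (δ : ℝ) (hδ : δ ∈ Set.Ioo (0 : ℝ) 1)
    (C : Matrix (Fin M) (Fin M) ℝ)
    (hC : C = (1 - δ) • (1 : Matrix (Fin M) (Fin M) ℝ) + δ • Matrix.of (fun _ _ => (1 : ℝ)))
    (S : Finset (Fin M)) (j : ℕ) (hcard : S.card = j) (hj : 1 ≤ j) (hjM : j < M) :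
    (C.submatrix (Subtype.val : {x // x ∉ S} → Fin M) (Subtype.val : {x // x ∉ S} → Fin M)
      - C.submatrix (Subtype.val : {x // x ∉ S} → Fin M) (Subtype.val : {x // x ∈ S} → Fin M)
        * (C.submatrix (Subtype.val : {x // x ∈ S} → Fin M)
            (Subtype.val : {x // x ∈ S} → Fin M))⁻¹
        * C.submatrix (Subtype.val : {x // x ∈ S} → Fin M)
            (Subtype.val : {x // x ∉ S} → Fin M)).trace
      = ((M : ℝ) - j) * (1 + 1 / (δ⁻¹ + j - 1)) * (1 - δ) := by
  obtain ⟨hδ0, hδ1⟩ := hδ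
  have h1δ : (1:ℝ) - δ ≠ 0 := by linarith
  have hδ0' : δ ≠ 0 := ne_of_gt hδ0
  set c : ℝ := 1 - δ + j * δ with hcdef
  have hc0 : c ≠ 0 := by
    have : (0:ℝ) ≤ (j:ℝ) * δ := by positivity
    nlinarith
  have hcardT : Fintype.card {x // x ∈ S} = j := by simp [hcard]
  have hcardT' : Fintype.card {x // x ∉ S} = M - j := by
    simp [Fintype.card_subtype_compl, hcard]
  -- all-ones matrices
  set JT : Matrix {x // x ∈ S} {x // x ∈ S} ℝ := Matrix.of (fun _ _ => 1) with hJT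
  set JN : Matrix {x // x ∉ S} {x // x ∉ S} ℝ := Matrix.of (fun _ _ => 1) with hJN
  set JNT : Matrix {x // x ∉ S} {x // x ∈ S} ℝ := Matrix.of (fun _ _ => 1) with hJNT
  set JTN : Matrix {x // x ∈ S} {x // x ∉ S} ℝ := Matrix.of (fun _ _ => 1) with hJTN
  -- submatrix identifications
  have hA : C.submatrix (Subtype.val : {x // x ∈ S} → Fin M)
      (Subtype.val : {x // x ∈ S} → Fin M) = (1 - δ) • 1 + δ • JT := by
    ext i k
    simp [hC, Matrix.one_apply, hJT]
  have hD : C.submatrix (Subtype.val : {x // x ∉ S} → Fin M)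
      (Subtype.val : {x // x ∉ S} → Fin M) = (1 - δ) • 1 + δ • JN := by
    ext i k
    simp [hC, Matrix.one_apply, Subtype.ext_iff, hJN]
  have hB1 : C.submatrix (Subtype.val : {x // x ∉ S} → Fin M)
      (Subtype.val : {x // x ∈ S} → Fin M) = δ • JNT := by
    ext i k
    have hne : (i : Fin M) ≠ (k : Fin M) := by
      intro h
      exact i.2 (h ▸ k.2)
    simp [hC, Matrix.one_apply, hne, hJNT]
  have hB2 : C.submatrix (Subtype.val : {x // x ∈ S} → Fin M)
      (Subtype.val : {x // x ∉ S} → Fin M) = δ • JTN := by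
    ext i k
    have hne : (i : Fin M) ≠ (k : Fin M) := by
      intro h
      exact k.2 (h ▸ i.2)
    simp [hC, Matrix.one_apply, hne, hJTN]
  -- multiplication facts
  have hJJ : JT * JT = (j:ℝ) • JT := by
    ext i k
    simp [hJT, Matrix.mul_apply, Finset.card_univ, hcardT, hcard]
  have hJNTT : JNT * JT = (j:ℝ) • JNT := by
    ext i k
    simp [hJT, hJNT, Matrix.mul_apply, Finset.card_univ, hcardT, hcard]
  have hJNTN : JNT * JTN = (j:ℝ) • JN := by
    ext i k
    simp [hJN, hJNT, hJTN, Matrix.mul_apply, Finset.card_univ, hcardT, hcard]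
  -- inverse of A
  have hAinv : (C.submatrix (Subtype.val : {x // x ∈ S} → Fin M)
      (Subtype.val : {x // x ∈ S} → Fin M))⁻¹ = (1/(1-δ)) • (1 - (δ/c) • JT) := by
    apply inv_eq_right_inv
    rw [hA]
    rw [Matrix.mul_smul, Matrix.mul_sub, Matrix.mul_one, Matrix.mul_smul]
    rw [Matrix.add_mul, Matrix.smul_mul, Matrix.smul_mul, Matrix.one_mul, hJJ]
    match_scalars
    · field_simp
    · simp only [hcdef]
      field_simp
      ring
  have hP : C.submatrix (Subtype.val : {x // x ∉ S} → Fin M)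
        (Subtype.val : {x // x ∈ S} → Fin M)
      * (C.submatrix (Subtype.val : {x // x ∈ S} → Fin M)
          (Subtype.val : {x // x ∈ S} → Fin M))⁻¹
      * C.submatrix (Subtype.val : {x // x ∈ S} → Fin M)
          (Subtype.val : {x // x ∉ S} → Fin M) = (δ^2 * j / c) • JN := by
    rw [hB1, hAinv, hB2]
    simp only [Matrix.mul_smul, Matrix.smul_mul, Matrix.mul_sub, Matrix.sub_mul,
      Matrix.mul_one, hJNTT, hJNTN]
    match_scalars
    simp only [hcdef]
    field_simp
    ring
  rw [hD, hP, Matrix.trace_sub, Matrix.trace_add, Matrix.trace_smul, Matrix.trace_smul,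
    Matrix.trace_smul, Matrix.trace_one]
  have htrJN : JN.trace = ((M - j : ℕ) : ℝ) := by
    simp [Matrix.trace, Matrix.diag, hJN, Finset.card_univ, hcardT']
  rw [htrJN, hcardT']
  have hMj : ((M - j : ℕ) : ℝ) = (M:ℝ) - j := by
    rw [Nat.cast_sub hjM.le]
  rw [hMj]
  have hinv : δ⁻¹ + (j:ℝ) - 1 = c / δ := by
    rw [hcdef]; field_simp; ring
  rw [hinv]
  simp only [smul_eq_mul, hcdef]
  field_simp
  ring
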